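/- Let A, B, X be n×n complex matrices such that the block matrix [[A, X], [X*, B]] is PPT. Then the block matrix [[(A+B)/2, X], [X*, (A+B)/2]] is PPT. -/

import Mathlib

open Matrix ComplexOrder
open scoped Classical

lemma aux_smul_half {m : Type*} [Fintype m] {M : Matrix m m ℂ} (hM : M.PosSemidef) :
    ((2 : ℂ)⁻¹ • M).PosSemidef := by
  constructor
  · have := hM.1
    unfold Matrix.IsHermitian at *
    rw [conjTranspose_smul, this]
    norm_num
  · intro x
    have : (0:ℂ) ≤ (2:ℂ)⁻¹ := by rw [Complex.le_def]; norm_num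
    exact (hM.smul this).2 x

lemma aux_swap {m : Type*} [Fintype m] {A B Y Z : Matrix m m ℂ}
    (h : (Matrix.fromBlocks A Y Z B).PosSemidef) :
    (Matrix.fromBlocks B Z Y A).PosSemidef := by
  have := h.submatrix Sum.swap
  rwa [Matrix.fromBlocks_submatrix_sum_swap_sum_swap] at this

theorem stmt4 {n : ℕ} (A B X : Matrix (Fin n) (Fin n) ℂ)
    (hH : (Matrix.fromBlocks A X Xᴴ B).PosSemidef)
    (hτ : (Matrix.fromBlocks A Xᴴ X B).PosSemidef) :
    (Matrix.fromBlocks ((2 : ℂ)⁻¹ • (A + B)) X Xᴴ ((2 : ℂ)⁻¹ • (A + B))).PosSemidef ∧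
      (Matrix.fromBlocks ((2 : ℂ)⁻¹ • (A + B)) Xᴴ X ((2 : ℂ)⁻¹ • (A + B))).PosSemidef := by
  have h1 := hH.add (aux_swap hτ)
  have h2 := hτ.add (aux_swap hH)
  constructor
  · have := aux_smul_half h1
    rw [Matrix.fromBlocks_add, Matrix.fromBlocks_smul] at this
    convert this using 2 <;> module
  · have := aux_smul_half h2
    rw [Matrix.fromBlocks_add, Matrix.fromBlocks_smul] at this
    convert this using 2 <;> module
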